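/- Let N be a positive integer, S ⊆ Fin N a nonempty set with i_* ∈ S and |S| = M ≥ 2, M < N. In ℂ^N with standard basis {e_i}, define |i_*⟩ = e_{i_*}, |S⁻⟩ = (1/√(M−1)) Σ_{i ∈ S \ {i_*}} e_i, |S⊥⟩ = (1/√(N−M)) Σ_{i ∉ S} e_i, and |N⟩ = (1/√N) Σ_i e_i. Let O_S be the diagonal operator with O_S e_i = (−1)^{[i ∈ S]} e_i, O_* the diagonal operator with O_* e_i = (−1)^{[i = i_*]} e_i, and G = I − 2|N⟩⟨N|. Then the three-dimensional subspace V = span{|i_*⟩, |S⁻⟩, |S⊥⟩} contains |N⟩ and is invariant under O_S, O_*, and G. -/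

import Mathlib

open scoped BigOperators

theorem stmt_14 (N M : ℕ) (hN : 0 < N)
    (S : Finset (Fin N)) (istar : Fin N) (hi : istar ∈ S)
    (hcard : S.card = M) (hM2 : 2 ≤ M) (hMN : M < N)
    (e : Fin N → EuclideanSpace ℂ (Fin N))
    (he : ∀ i, e i = EuclideanSpace.single i 1)
    (ketStar ketSm ketSp ketN : EuclideanSpace ℂ (Fin N))
    (hks : ketStar = e istar)
    (hsm : ketSm = ((1 / Real.sqrt ((M : ℝ) - 1) : ℝ) : ℂ) • ∑ i ∈ S.erase istar, e i)
    (hsp : ketSp = ((1 / Real.sqrt ((N : ℝ) - (M : ℝ)) : ℝ) : ℂ) • ∑ i ∈ Sᶜ, e i)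
    (hkN : ketN = ((1 / Real.sqrt (N : ℝ) : ℝ) : ℂ) • ∑ i, e i)
    (OS Ostar : EuclideanSpace ℂ (Fin N) →ₗ[ℂ] EuclideanSpace ℂ (Fin N))
    (hOS : ∀ i, OS (e i) = (if i ∈ S then (-1 : ℂ) else 1) • e i)
    (hOstar : ∀ i, Ostar (e i) = (if i = istar then (-1 : ℂ) else 1) • e i)
    (G : EuclideanSpace ℂ (Fin N) → EuclideanSpace ℂ (Fin N))
    (hG : ∀ v, G v = v - (2 : ℂ) • (inner ℂ ketN v : ℂ) • ketN) :
    ketN ∈ Submodule.span ℂ {ketStar, ketSm, ketSp} ∧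
    ∀ v ∈ Submodule.span ℂ {ketStar, ketSm, ketSp},
      OS v ∈ Submodule.span ℂ {ketStar, ketSm, ketSp} ∧
      Ostar v ∈ Submodule.span ℂ {ketStar, ketSm, ketSp} ∧
      G v ∈ Submodule.span ℂ {ketStar, ketSm, ketSp} := by
  set V := Submodule.span ℂ ({ketStar, ketSm, ketSp} : Set (EuclideanSpace ℂ (Fin N))) with hV
  have hstar : ketStar ∈ V := Submodule.subset_span (by simp)
  have hsmV : ketSm ∈ V := Submodule.subset_span (by simp)
  have hspV : ketSp ∈ V := Submodule.subset_span (by simp)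
  have hM1 : (1:ℝ) ≤ (M:ℝ) - 1 := by
    have : (2:ℝ) ≤ (M:ℝ) := by exact_mod_cast hM2
    linarith
  have hNM : (0:ℝ) < (N:ℝ) - (M:ℝ) := by
    have : (M:ℝ) < (N:ℝ) := by exact_mod_cast hMN
    linarith
  have hM0 : (0:ℝ) < (M:ℝ) - 1 := lt_of_lt_of_le one_pos hM1
  have hc1 : ((1 / Real.sqrt ((M:ℝ) - 1) : ℝ) : ℂ) ≠ 0 :=
    Complex.ofReal_ne_zero.mpr (one_div_ne_zero (ne_of_gt (Real.sqrt_pos.mpr hM0)))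
  have hc2 : ((1 / Real.sqrt ((N:ℝ) - (M:ℝ)) : ℝ) : ℂ) ≠ 0 :=
    Complex.ofReal_ne_zero.mpr (one_div_ne_zero (ne_of_gt (Real.sqrt_pos.mpr hNM)))
  have hsumE : (∑ i ∈ S.erase istar, e i) ∈ V := by
    have : (∑ i ∈ S.erase istar, e i)
        = ((1 / Real.sqrt ((M:ℝ) - 1) : ℝ) : ℂ)⁻¹ • ketSm := by
      rw [hsm, smul_smul, inv_mul_cancel₀ hc1, one_smul]
    rw [this]; exact V.smul_mem _ hsmV
  have hsumC : (∑ i ∈ Sᶜ, e i) ∈ V := by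
    have : (∑ i ∈ Sᶜ, e i)
        = ((1 / Real.sqrt ((N:ℝ) - (M:ℝ)) : ℝ) : ℂ)⁻¹ • ketSp := by
      rw [hsp, smul_smul, inv_mul_cancel₀ hc2, one_smul]
    rw [this]; exact V.smul_mem _ hspV
  have hestar : e istar ∈ V := hks ▸ hstar
  have hsumU : (∑ i, e i) ∈ V := by
    have hsplit : (∑ i, e i) = ((∑ i ∈ S.erase istar, e i) + e istar) + ∑ i ∈ Sᶜ, e i := by
      rw [Finset.sum_erase_add S _ hi, Finset.sum_add_sum_compl]
    rw [hsplit]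
    exact V.add_mem (V.add_mem hsumE hestar) hsumC
  have hNV : ketN ∈ V := by
    rw [hkN]; exact V.smul_mem _ hsumU
  refine ⟨hNV, ?_⟩
  have hOSV : ∀ v ∈ V, OS v ∈ V := by
    have : V ≤ V.comap OS := by
      rw [hV]
      apply Submodule.span_le.mpr
      rintro x (rfl | rfl | rfl) <;>
        simp only [SetLike.mem_coe, Submodule.mem_comap]
      · subst hks
        rw [hOS, if_pos hi, neg_smul, one_smul]
        exact V.neg_mem hestar
      · subst hsm
        rw [map_smul, map_sum]
        have hc : ∑ i ∈ S.erase istar, OS (e i) = ∑ i ∈ S.erase istar, (-1 : ℂ) • e i :=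
          Finset.sum_congr rfl (fun i hi' => by rw [hOS i, if_pos (S.mem_of_mem_erase hi')])
        rw [hc]
        simp only [neg_smul, one_smul, Finset.sum_neg_distrib, smul_neg]
        exact V.neg_mem (V.smul_mem _ hsumE)
      · subst hsp
        rw [map_smul, map_sum]
        have hc : ∑ i ∈ Sᶜ, OS (e i) = ∑ i ∈ Sᶜ, e i :=
          Finset.sum_congr rfl (fun i hi' => by
            rw [hOS i, if_neg (Finset.mem_compl.mp hi'), one_smul])
        rw [hc]
        exact hspV
    exact fun v hv => this hv
  have hOstarV : ∀ v ∈ V, Ostar v ∈ V := by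
    have : V ≤ V.comap Ostar := by
      rw [hV]
      apply Submodule.span_le.mpr
      rintro x (rfl | rfl | rfl) <;>
        simp only [SetLike.mem_coe, Submodule.mem_comap]
      · subst hks
        rw [hOstar, if_pos rfl, neg_smul, one_smul]
        exact V.neg_mem hestar
      · subst hsm
        rw [map_smul, map_sum]
        have hc : ∑ i ∈ S.erase istar, Ostar (e i) = ∑ i ∈ S.erase istar, e i :=
          Finset.sum_congr rfl (fun i hi' => by
            rw [hOstar i, if_neg (Finset.ne_of_mem_erase hi'), one_smul])
        rw [hc]
        exact hsmV
      · subst hsp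
        rw [map_smul, map_sum]
        have hc : ∑ i ∈ Sᶜ, Ostar (e i) = ∑ i ∈ Sᶜ, e i :=
          Finset.sum_congr rfl (fun i hi' => by
            rw [hOstar i, if_neg (by rintro rfl; exact (Finset.mem_compl.mp hi') hi), one_smul])
        rw [hc]
        exact hspV
    exact fun v hv => this hv
  intro v hv
  refine ⟨hOSV v hv, hOstarV v hv, ?_⟩
  rw [hG]
  exact V.sub_mem hv (V.smul_mem _ (V.smul_mem _ hNV))
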